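/- arXiv:1707.09919 — 2 statements merged into one kernel-verified Lean document; each statement's English description precedes it below -/
import Mathlib

section
/- Let C : ℕ → ℝ be defined by C(1) = 1 and C(N) = ∑_{i=1}^{N-1} C(i)·C(N-i) for N ≥ 2. Then for all s with 0 ≤ s < 1/4, the power series ∑_{i=1}^∞ C(i)·s^i converges and its sum equals 1/2 - √(1/4 - s). -/
open Finset

lemma cat_le_four_pow (n : ℕ) : (catalan n : ℝ) ≤ 4 ^ n := by
  have h1 : catalan n ≤ n.centralBinom := by
    calc catalan n ≤ (n + 1) * catalan n := Nat.le_mul_of_pos_left _ n.succ_pos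
    _ = n.centralBinom := succ_mul_catalan_eq_centralBinom n
  have h2 : n.centralBinom ≤ 4 ^ n := by
    calc n.centralBinom = (2 * n).choose n := Nat.centralBinom_eq_two_mul_choose n
    _ ≤ (2 * n + 1).choose n := Nat.choose_le_succ _ _
    _ ≤ 4 ^ n := Nat.choose_middle_le_pow n
  exact_mod_cast h1.trans h2

lemma cat_summable_norm {s : ℝ} (hs0 : 0 ≤ s) (hs : s < 1 / 4) :
    Summable fun n : ℕ => ‖(catalan n : ℝ) * s ^ (n + 1)‖ := by
  have h4s : 4 * s < 1 := by linarith
  refine Summable.of_nonneg_of_le (fun n => norm_nonneg _)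
    (fun n => ?_) ((summable_geometric_of_lt_one (by positivity) h4s).mul_left s)
  rw [Real.norm_eq_abs, abs_of_nonneg (by positivity)]
  calc (catalan n : ℝ) * s ^ (n + 1) ≤ 4 ^ n * s ^ (n + 1) := by
        gcongr; exact cat_le_four_pow n
    _ = s * (4 * s) ^ n := by ring

noncomputable def catF (s : ℝ) : ℝ := ∑' n : ℕ, (catalan n : ℝ) * s ^ (n + 1)

lemma cat_hasSum {s : ℝ} (hs0 : 0 ≤ s) (hs : s < 1 / 4) :
    HasSum (fun n : ℕ => (catalan n : ℝ) * s ^ (n + 1)) (catF s) :=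
  (cat_summable_norm hs0 hs).of_norm.hasSum

lemma catF_quad {s : ℝ} (hs0 : 0 ≤ s) (hs : s < 1 / 4) :
    catF s ^ 2 = catF s - s := by
  have hnorm := cat_summable_norm hs0 hs
  have hsum := hnorm.of_norm
  have hmul := tsum_mul_tsum_eq_tsum_sum_antidiagonal_of_summable_norm hnorm hnorm
  have hts : catF s = ∑' n, (catalan n : ℝ) * s ^ (n + 1) := rfl
  have key : ∀ n : ℕ, (∑ kl ∈ Finset.HasAntidiagonal.antidiagonal n,
      ((catalan kl.1 : ℝ) * s ^ (kl.1 + 1)) * ((catalan kl.2 : ℝ) * s ^ (kl.2 + 1)))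
      = (catalan (n + 1) : ℝ) * s ^ (n + 2) := by
    intro n
    rw [catalan_succ', Nat.cast_sum]
    rw [Finset.sum_mul]
    refine Finset.sum_congr rfl fun kl hkl => ?_
    have h := Finset.HasAntidiagonal.mem_antidiagonal.mp hkl
    push_cast
    rw [← h]
    ring
  have h2 : catF s ^ 2 = ∑' n : ℕ, (catalan (n + 1) : ℝ) * s ^ (n + 2) := by
    rw [sq, hts, hmul]
    exact tsum_congr key
  -- shift: catF s = s + ∑' n, catalan (n+1) * s^(n+2)
  have hshift := (hasSum_nat_add_iff' 1).mpr (cat_hasSum hs0 hs)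
  have h3 : (∑' n : ℕ, (catalan (n + 1) : ℝ) * s ^ (n + 2)) = catF s - s := by
    have := hshift.tsum_eq
    simpa using this
  rw [h2, h3]

lemma catF_mono {s t : ℝ} (hs0 : 0 ≤ s) (hst : s ≤ t) (ht : t < 1 / 4) :
    catF s ≤ catF t := by
  refine hasSum_le (fun n => ?_) (cat_hasSum hs0 (lt_of_le_of_lt hst ht))
    (cat_hasSum (hs0.trans hst) ht)
  gcongr

lemma catF_eq {s : ℝ} (hs0 : 0 ≤ s) (hs : s < 1 / 4) :
    catF s = 1 / 2 - Real.sqrt (1 / 4 - s) := by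
  have habs : ∀ u : ℝ, 0 ≤ u → u < 1 / 4 →
      catF u = 1 / 2 - Real.sqrt (1 / 4 - u) ∨
      catF u = 1 / 2 + Real.sqrt (1 / 4 - u) := by
    intro u hu0 hu
    have hq := catF_quad hu0 hu
    have h : (catF u - 1 / 2) ^ 2 = 1 / 4 - u := by ring_nf; ring_nf at hq; linarith
    have habs : |catF u - 1/2| = Real.sqrt (1/4 - u) := by
      rw [← h, Real.sqrt_sq_eq_abs]
    rcases abs_eq (Real.sqrt_nonneg _) |>.mp habs with h' | h'
    · right; linarith
    · left; linarith
  rcases habs s hs0 hs with h | h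
  · exact h
  · exfalso
    set t := (s + 1 / 4) / 2 with ht
    have hst : s < t := by rw [ht]; linarith
    have ht4 : t < 1 / 4 := by rw [ht]; linarith
    have ht0 : 0 ≤ t := by rw [ht]; linarith
    have hmono := catF_mono hs0 hst.le ht4
    have hsq : Real.sqrt (1 / 4 - t) < Real.sqrt (1 / 4 - s) :=
      Real.sqrt_lt_sqrt (by linarith) (by linarith)
    rcases habs t ht0 ht4 with h2 | h2
    · have : Real.sqrt (1/4 - s) ≥ 0 := Real.sqrt_nonneg _
      have : Real.sqrt (1/4 - t) ≥ 0 := Real.sqrt_nonneg _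
      linarith
    · linarith

/-- The generating function of the Catalan-type convolution sequence
`C 1 = 1`, `C N = ∑_{i=1}^{N-1} C i * C (N-i)` equals `1/2 - √(1/4 - s)` on `[0, 1/4)`. -/
theorem catalan_generating_function
    (C : ℕ → ℝ) (hC1 : C 1 = 1)
    (hCrec : ∀ N : ℕ, 2 ≤ N → C N = ∑ i ∈ Finset.Ico 1 N, C i * C (N - i)) :
    ∀ s : ℝ, 0 ≤ s → s < 1 / 4 →
      HasSum (fun i : ℕ => C (i + 1) * s ^ (i + 1))
        (1 / 2 - Real.sqrt (1 / 4 - s)) := by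
  have hCcat : ∀ n : ℕ, C (n + 1) = catalan n := by
    intro n
    induction n using Nat.strong_induction_on with
    | _ n ih =>
      match n with
      | 0 => simpa using hC1
      | Nat.succ m =>
        have h2 : 2 ≤ m + 2 := by omega
        rw [hCrec (m + 2) h2]
        rw [Finset.sum_Ico_eq_sum_range]
        simp only [show m + 2 - 1 = m + 1 from rfl]
        have : ∀ j ∈ Finset.range (m + 1), C (1 + j) * C (m + 2 - (1 + j))
            = (catalan j : ℝ) * (catalan (m - j) : ℝ) := by
          intro j hj
          have hjm : j ≤ m := by simpa using Nat.lt_succ_iff.mp (Finset.mem_range.mp hj)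
          rw [show (1 : ℕ) + j = j + 1 by omega]
          rw [show m + 2 - (j + 1) = (m - j) + 1 by omega]
          rw [ih j (by omega), ih (m - j) (by omega)]
        rw [Finset.sum_congr rfl this]
        have hcat : (catalan (m + 1) : ℝ)
            = ∑ x ∈ Finset.range (m + 1), (catalan x : ℝ) * catalan (m - x) := by
          rw [catalan_succ',
            Finset.Nat.sum_antidiagonal_eq_sum_range_succ
              (fun x y => catalan x * catalan y) m]
          push_cast
          rfl
        rw [Nat.succ_eq_add_one, ← hcat]
  intro s hs0 hs
  have h := cat_hasSum hs0 hs
  rw [catF_eq hs0 hs] at h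
  convert h using 2 with i
  rw [hCcat i]
end

section
/- Fix n ≥ 1 and set α = 1 + 2/n. Let r > 0 and define p_i = α^i, σ_i = 2^{-1-i}·(r/4), τ_{-1} = 3r/4, and τ_i = 3r/4 - ∑_{j=0}^i σ_j for i ≥ 0. Then τ_i → r/2 as i → ∞, and there exists a constant c = c(n) (independent of r) such that the infinite product ∏_{i=0}^∞ ( p_i/(1 + (r - τ_{i-1})²) + 1/σ_i² )^{1/p_i} is finite and bounded above by c(n)/r^{n+2}. -/
open Filter
open scoped BigOperators

/-- The product estimate closing the Nash–Moser iteration: with `α = 1 + 2/n`,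
`p_i = α^i`, `σ_i = 2^{-1-i}(r/4)`, `τ_{-1} = 3r/4`, `τ_i = 3r/4 - ∑_{j≤i} σ_j`,
one has `τ_i → r/2` and `∏_{i≥0} (p_i/(1+(r-τ_{i-1})²) + 1/σ_i²)^{1/p_i} ≤ c(n)/r^{n+2}`
with `c(n)` independent of `r`. -/
theorem nash_moser_product_estimate (n : ℕ) (hn : 1 ≤ n) :
    ∃ c : ℝ, 0 < c ∧ ∀ r : ℝ, 0 < r →
      ∀ p σ τ : ℕ → ℝ,
        (∀ i : ℕ, p i = (1 + 2 / (n : ℝ)) ^ i) →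
        (∀ i : ℕ, σ i = (2 : ℝ) ^ (-(1 : ℝ) - (i : ℝ)) * (r / 4)) →
        (∀ i : ℕ, τ i = 3 * r / 4 - ∑ j ∈ Finset.range (i + 1), σ j) →
        Tendsto τ atTop (nhds (r / 2)) ∧
        Multipliable (fun i : ℕ =>
          (p i / (1 + (r - (if i = 0 then 3 * r / 4 else τ (i - 1))) ^ 2)
            + 1 / (σ i) ^ 2) ^ (1 / p i)) ∧
        (∏' i : ℕ,
          (p i / (1 + (r - (if i = 0 then 3 * r / 4 else τ (i - 1))) ^ 2)
            + 1 / (σ i) ^ 2) ^ (1 / p i))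
          ≤ c / r ^ (n + 2) := by
  have hn0 : (0:ℝ) < n := by exact_mod_cast Nat.lt_of_lt_of_le Nat.zero_lt_one hn
  have hn1 : (1:ℝ) ≤ n := by exact_mod_cast hn
  set x : ℝ := (1 + 2/(n:ℝ))⁻¹ with hxdef
  have hα1 : (1:ℝ) < 1 + 2/(n:ℝ) := by
    have : (0:ℝ) < 2/(n:ℝ) := by positivity
    linarith
  have hα4 : (1:ℝ) + 2/(n:ℝ) ≤ 4 := by
    have : 2/(n:ℝ) ≤ 2 := by
      rw [div_le_iff₀ hn0]; nlinarith
    linarith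
  have hx0 : 0 < x := by rw [hxdef]; positivity
  have hx1 : x < 1 := by rw [hxdef]; exact inv_lt_one_of_one_lt₀ hα1
  have hxsum : ∑' i:ℕ, x^i = ((n:ℝ)+2)/2 := by
    rw [tsum_geometric_of_lt_one hx0.le hx1, hxdef]
    have hne : (1 + 2/(n:ℝ)) ≠ 0 := by positivity
    have hne2 : (n:ℝ) + 2 ≠ 0 := by positivity
    field_simp
    ring
  have hS : Summable (fun i:ℕ => (i:ℝ) * x^i) := by
    have := summable_pow_mul_geometric_of_norm_lt_one (R := ℝ) 1
      (by rw [Real.norm_eq_abs, abs_of_pos hx0]; exact hx1)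
    simpa [pow_one] using this
  set S : ℝ := ∑' i:ℕ, (i:ℝ)*x^i with hSdef
  refine ⟨Real.exp (Real.log 80 * (((n:ℝ)+2)/2) + Real.log 4 * S), Real.exp_pos _, ?_⟩
  intro r hr p σ τ hp hσ hτ
  have hgeom : Summable (fun i:ℕ => x^i) := summable_geometric_of_lt_one hx0.le hx1
  -- σ closed form
  have hσ' : ∀ i, σ i = r / 2^(i+3) := by
    intro i
    rw [hσ]
    have h1 : (-(1:ℝ) - (i:ℝ)) = -(((i+1:ℕ)):ℝ) := by push_cast; ring
    rw [h1, Real.rpow_neg (by norm_num : (0:ℝ) ≤ 2), Real.rpow_natCast]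
    have h2 : ((2:ℝ)^(i+1)) ≠ 0 := by positivity
    have h3 : ((2:ℝ)^(i+3)) ≠ 0 := by positivity
    field_simp
    ring
  have hσpos : ∀ i, 0 < σ i := by intro i; rw [hσ' i]; positivity
  -- τ closed form
  have hτ' : ∀ i, τ i = r/2 + r/8 * ((2:ℝ)^i)⁻¹ := by
    intro i
    have hsum : ∀ m:ℕ, ∑ j ∈ Finset.range m, σ j = r/4 * (1 - ((2:ℝ)^m)⁻¹) := by
      intro m
      induction m with
      | zero => simp
      | succ k ih =>
        rw [Finset.sum_range_succ, ih, hσ' k]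
        have h2 : ((2:ℝ)^k) ≠ 0 := by positivity
        have h3 : ((2:ℝ)^(k+1)) ≠ 0 := by positivity
        have h4 : ((2:ℝ)^(k+3)) ≠ 0 := by positivity
        field_simp
        ring
    rw [hτ, hsum (i+1)]
    have h2 : ((2:ℝ)^i) ≠ 0 := by positivity
    have h3 : ((2:ℝ)^(i+1)) ≠ 0 := by positivity
    field_simp
    ring
  constructor
  · -- Tendsto
    have h0 : Tendsto (fun i:ℕ => ((2:ℝ)^i)⁻¹) atTop (nhds 0) := by
      have := tendsto_pow_atTop_nhds_zero_of_lt_one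
        (by norm_num : (0:ℝ) ≤ 1/2) (by norm_num : (1/2:ℝ) < 1)
      simpa [one_div, inv_pow] using this
    have h1 : Tendsto (fun i:ℕ => r/2 + r/8 * ((2:ℝ)^i)⁻¹) atTop (nhds (r/2 + r/8 * 0)) :=
      tendsto_const_nhds.add (h0.const_mul (r/8))
    have h2 := h1.congr (fun i => (hτ' i).symm)
    simpa using h2
  -- abbreviations
  set a : ℕ → ℝ := fun i =>
    p i / (1 + (r - (if i = 0 then 3 * r / 4 else τ (i - 1))) ^ 2) + 1 / (σ i) ^ 2 with hadef
  have hppos : ∀ i, 0 < p i := by intro i; rw [hp]; positivity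
  have hexp : ∀ i, 1 / p i = x^i := by
    intro i; rw [hp i, one_div, ← inv_pow, ← hxdef]
  have hσsq : ∀ i, 1/(σ i)^2 = 64 * 4^i / r^2 := by
    intro i
    rw [hσ' i]
    have h4 : (4:ℝ)^i = 2^(2*i) := by rw [show (4:ℝ) = 2^2 by norm_num, ← pow_mul]
    rw [h4, div_pow, one_div_div]
    congr 1
    ring
  have hsq : ∀ i, r^2/16 ≤ (r - (if i = 0 then 3 * r / 4 else τ (i - 1)))^2 := by
    intro i
    rcases i with _ | k
    · rw [if_pos rfl]
      nlinarith [sq_nonneg r]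
    · rw [if_neg (Nat.succ_ne_zero k)]
      simp only [Nat.succ_sub_one]
      rw [hτ' k]
      have h2k : (1:ℝ) ≤ 2^k := by
        calc (1:ℝ) = 1^k := (one_pow k).symm
        _ ≤ 2^k := pow_le_pow_left₀ (by norm_num) (by norm_num) k
      have hk : ((2:ℝ)^k)⁻¹ ≤ 1 := inv_le_one_of_one_le₀ h2k
      have hkpos : (0:ℝ) < ((2:ℝ)^k)⁻¹ := by positivity
      have ht : r^2 * ((2:ℝ)^k)⁻¹ ≤ r^2 := mul_le_of_le_one_right (sq_nonneg r) hk
      nlinarith [sq_nonneg (r * ((2:ℝ)^k)⁻¹), sq_nonneg r]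
  have halow : ∀ i, 64 * 4^i / r^2 ≤ a i := by
    intro i
    have h1 : 0 ≤ p i / (1 + (r - (if i = 0 then 3 * r / 4 else τ (i - 1))) ^ 2) := by
      apply div_nonneg (hppos i).le
      nlinarith [sq_nonneg (r - (if i = 0 then 3 * r / 4 else τ (i - 1)))]
    have h2 := hσsq i
    simp only [hadef]
    linarith
  have haup : ∀ i, a i ≤ 80 * 4^i / r^2 := by
    intro i
    have hd : r^2/16 ≤ 1 + (r - (if i = 0 then 3 * r / 4 else τ (i - 1)))^2 := by
      have := hsq i; linarith
    have hd0 : (0:ℝ) < r^2/16 := by positivity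
    have h2 : p i / (1 + (r - (if i = 0 then 3 * r / 4 else τ (i - 1)))^2) ≤ p i / (r^2/16) :=
      div_le_div_of_nonneg_left (hppos i).le hd0 hd
    have h3 : p i / (r^2/16) ≤ 16 * 4^i / r^2 := by
      rw [hp, div_le_div_iff₀ (by positivity) (by positivity)]
      have hpow : ((1:ℝ)+2/(n:ℝ))^i ≤ 4^i := pow_le_pow_left₀ (by positivity) hα4 i
      have hmul := mul_le_mul_of_nonneg_right hpow (sq_nonneg r)
      nlinarith [hmul]
    have h4 := hσsq i
    have h5 : 16 * (4:ℝ)^i / r^2 + 64 * 4^i / r^2 = 80 * 4^i / r^2 := by ring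
    simp only [hadef]
    linarith
  have hapos : ∀ i, 0 < a i := fun i => lt_of_lt_of_le (by positivity) (halow i)
  set L : ℕ → ℝ := fun i => Real.log (a i) with hLdef
  have hLup : ∀ i, L i ≤ Real.log 80 + i * Real.log 4 - 2 * Real.log r := by
    intro i
    have h := Real.log_le_log (hapos i) (haup i)
    calc L i ≤ Real.log (80 * 4^i / r^2) := h
      _ = Real.log 80 + i * Real.log 4 - 2 * Real.log r := by
        rw [Real.log_div (by positivity) (by positivity),
          Real.log_mul (by norm_num) (by positivity), Real.log_pow, Real.log_pow]
        push_cast; ring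
  have hLlow : ∀ i, Real.log 64 + i * Real.log 4 - 2 * Real.log r ≤ L i := by
    intro i
    have h := Real.log_le_log (by positivity : (0:ℝ) < 64 * 4^i / r^2) (halow i)
    have heq : Real.log (64 * 4^i / r^2)
        = Real.log 64 + i * Real.log 4 - 2 * Real.log r := by
      rw [Real.log_div (by positivity) (by positivity),
        Real.log_mul (by norm_num) (by positivity), Real.log_pow, Real.log_pow]
      push_cast; ring
    rw [heq] at h
    exact h
  set b : ℕ → ℝ := fun i => L i * x^i with hbdef
  have hxpow : ∀ i:ℕ, (0:ℝ) ≤ x^i := fun i => pow_nonneg hx0.le i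
  have hlog4 : (0:ℝ) ≤ Real.log 4 := Real.log_nonneg (by norm_num)
  have hlog80 : (0:ℝ) ≤ Real.log 80 := Real.log_nonneg (by norm_num)
  have hlog64 : (0:ℝ) ≤ Real.log 64 := Real.log_nonneg (by norm_num)
  have hb : Summable b := by
    have hmaj : ∀ i, |b i| ≤ (Real.log 80 + 2*|Real.log r|) * x^i
        + Real.log 4 * ((i:ℝ)*x^i) := by
      intro i
      have hi4 : (0:ℝ) ≤ (i:ℝ) * Real.log 4 := by positivity
      have habs : |L i| ≤ (Real.log 80 + 2*|Real.log r|) + (i:ℝ)*Real.log 4 := by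
        rw [abs_le]
        constructor
        · have := hLlow i
          have h1 := neg_abs_le (Real.log r)
          have h2 := le_abs_self (Real.log r)
          linarith
        · have := hLup i
          have h1 := neg_abs_le (Real.log r)
          have h2 := le_abs_self (Real.log r)
          linarith
      calc |b i| = |L i| * x^i := by rw [hbdef, abs_mul, abs_of_nonneg (hxpow i)]
        _ ≤ ((Real.log 80 + 2*|Real.log r|) + (i:ℝ)*Real.log 4) * x^i :=
          mul_le_mul_of_nonneg_right habs (hxpow i)
        _ = (Real.log 80 + 2*|Real.log r|) * x^i + Real.log 4 * ((i:ℝ)*x^i) := by ring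
    have hg : Summable (fun i:ℕ => (Real.log 80 + 2*|Real.log r|) * x^i
        + Real.log 4 * ((i:ℝ)*x^i)) := (hgeom.mul_left _).add (hS.mul_left _)
    exact Summable.of_abs (hg.of_nonneg_of_le (fun i => abs_nonneg _) hmaj)
  have hterm : (fun i : ℕ =>
      (p i / (1 + (r - (if i = 0 then 3 * r / 4 else τ (i - 1))) ^ 2)
        + 1 / (σ i) ^ 2) ^ (1 / p i)) = fun i => Real.exp (b i) := by
    funext i
    show (a i) ^ (1 / p i) = Real.exp (b i)
    rw [Real.rpow_def_of_pos (hapos i), hexp i]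
  have hprod : HasProd (fun i => Real.exp (b i)) (Real.exp (∑' i, b i)) := by
    have h1 := hb.hasSum
    have h2 : Tendsto (fun s : Finset ℕ => Real.exp (∑ i ∈ s, b i)) atTop
        (nhds (Real.exp (∑' i, b i))) := (Real.continuous_exp.continuousAt.tendsto).comp h1
    show Tendsto (fun s : Finset ℕ => ∏ i ∈ s, Real.exp (b i)) atTop
      (nhds (Real.exp (∑' i, b i)))
    simpa only [Real.exp_sum] using h2
  constructor
  · rw [hterm]
    exact ⟨_, hprod⟩
  · rw [hterm, hprod.tprod_eq]
    have hu : Summable (fun i:ℕ => (Real.log 80 - 2*Real.log r)*x^i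
        + Real.log 4*((i:ℝ)*x^i)) := (hgeom.mul_left _).add (hS.mul_left _)
    have hble : ∀ i, b i ≤ (Real.log 80 - 2*Real.log r)*x^i + Real.log 4*((i:ℝ)*x^i) := by
      intro i
      have h := mul_le_mul_of_nonneg_right (hLup i) (hxpow i)
      calc b i ≤ (Real.log 80 + i*Real.log 4 - 2*Real.log r)*x^i := h
        _ = (Real.log 80 - 2*Real.log r)*x^i + Real.log 4*((i:ℝ)*x^i) := by ring
    have h5 : ∑' i, b i ≤ ∑' i : ℕ, ((Real.log 80 - 2*Real.log r)*x^i
        + Real.log 4*((i:ℝ)*x^i)) := Summable.tsum_le_tsum hble hb hu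
    have h6 : ∑' i:ℕ, ((Real.log 80 - 2*Real.log r)*x^i + Real.log 4*((i:ℝ)*x^i))
        = (Real.log 80 - 2*Real.log r)*(((n:ℝ)+2)/2) + Real.log 4 * S := by
      rw [Summable.tsum_add (hgeom.mul_left _) (hS.mul_left _), tsum_mul_left, tsum_mul_left,
        hxsum, ← hSdef]
    have h7 : Real.exp (∑' i, b i)
        ≤ Real.exp ((Real.log 80 - 2*Real.log r)*(((n:ℝ)+2)/2) + Real.log 4 * S) :=
      Real.exp_le_exp.mpr (by rw [← h6]; exact h5)
    refine h7.trans_eq ?_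
    have hsplit : (Real.log 80 - 2*Real.log r)*(((n:ℝ)+2)/2) + Real.log 4 * S
        = (Real.log 80 * (((n:ℝ)+2)/2) + Real.log 4 * S) + (-(((n:ℝ)+2)*Real.log r)) := by
      ring
    rw [hsplit, Real.exp_add, Real.exp_neg]
    have h8 : Real.exp (((n:ℝ)+2)*Real.log r) = r^(n+2) := by
      rw [show ((n:ℝ)+2) = ((n+2:ℕ):ℝ) by push_cast; ring,
        Real.exp_nat_mul, Real.exp_log hr]
    rw [h8]; ring
end
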